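/- arXiv:0811.3075 — 5 statements merged into one kernel-verified Lean document; each statement's English description precedes it below -/
import Mathlib

section
/- Let f : [0,∞) → ℝ be right-continuous with left limits and satisfy f(0) = 0. For x > 0 set τ(x) = inf{t > 0 : f(t) > x}, and whenever τ(x) < ∞ define U(x) = x − sup{f(s) : 0 ≤ s < τ(x)} (undershoot of the previous supremum), V(x) = x − f(τ(x)−) where f(τ(x)−) is the left limit of f at τ(x) (undershoot), and O(x) = f(τ(x)) − x (overshoot). Then for every x > 0 with τ(x) < ∞ and all real numbers u, v, w with 0 ≤ u < x, v ≥ u and w ≥ 0 (noting τ(x−u) ≤ τ(x) < ∞), the following equivalence of events holds pathwise: [U(x) > u and V(x) > v and O(x) > w] if and only if [U(x−u) > 0 and V(x−u) > v−u and O(x−u) > w+u]. Moreover, in the forward direction one in fact has τ(x−u) = τ(x). -/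
open Set Function

/-- First passage time of `f` above level `x` (finite iff `hitsAbove f x`). -/
noncomputable def tauPass (f : ℝ → ℝ) (x : ℝ) : ℝ := sInf {t : ℝ | 0 < t ∧ x < f t}

/-- The event that `f` passes above the level `x` at a finite time, i.e. `τ(x) < ∞`. -/
def hitsAbove (f : ℝ → ℝ) (x : ℝ) : Prop := {t : ℝ | 0 < t ∧ x < f t}.Nonempty

/-- Undershoot of the previous supremum:
`U(x) = x - sup {f s : 0 ≤ s < τ(x)}`. -/
noncomputable def Ushoot (f : ℝ → ℝ) (x : ℝ) : ℝ :=
  x - sSup (f '' Ico 0 (tauPass f x))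

/-- Undershoot: `V(x) = x - f(τ(x)-)`, using the left limit of `f` at `τ(x)`. -/
noncomputable def Vshoot (f : ℝ → ℝ) (x : ℝ) : ℝ :=
  x - Function.leftLim f (tauPass f x)

/-- Overshoot: `O(x) = f(τ(x)) - x`. -/
noncomputable def Oshoot (f : ℝ → ℝ) (x : ℝ) : ℝ :=
  f (tauPass f x) - x

lemma aux_tau_pos (f : ℝ → ℝ) (hf0 : f 0 = 0)
    (hrc : ContinuousWithinAt f (Ici 0) 0)
    {y : ℝ} (hy : 0 < y) (hhit : hitsAbove f y) : 0 < tauPass f y := by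
  have h1 : f ⁻¹' Iio y ∈ nhdsWithin (0:ℝ) (Ici 0) := by
    apply hrc
    rw [hf0]
    exact Iio_mem_nhds hy
  rcases (nhdsGE_basis_Ico (0:ℝ)).mem_iff.mp h1 with ⟨b, hb, hsub⟩
  refine lt_of_lt_of_le hb (le_csInf hhit ?_)
  rintro t ⟨ht0, hty⟩
  by_contra h
  push_neg at h
  exact lt_asymm hty (hsub ⟨ht0.le, h⟩)

lemma aux_le_on_Ico (f : ℝ → ℝ) (hf0 : f 0 = 0) {y : ℝ} (hy : 0 < y) :
    ∀ s ∈ Ico (0:ℝ) (tauPass f y), f s ≤ y := by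
  rintro s ⟨hs0, hs⟩
  rcases eq_or_lt_of_le hs0 with h | h
  · rw [← h, hf0]; exact hy.le
  · by_contra hc
    push_neg at hc
    have hb : BddBelow {t : ℝ | 0 < t ∧ y < f t} := ⟨0, fun t ht => ht.1.le⟩
    exact absurd (csInf_le hb ⟨h, hc⟩) (not_le.mpr hs)

theorem statement0 (f : ℝ → ℝ)
    (hf_rc : ∀ t : ℝ, 0 ≤ t → ContinuousWithinAt f (Ici t) t)
    (hf_ll : ∀ t : ℝ, 0 < t → ∃ l : ℝ, Filter.Tendsto f (nhdsWithin t (Iio t)) (nhds l))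
    (hf0 : f 0 = 0)
    (x : ℝ) (hx : 0 < x) (hhit : hitsAbove f x)
    (u v w : ℝ) (hu0 : 0 ≤ u) (hux : u < x) (huv : u ≤ v) (hw : 0 ≤ w) :
    hitsAbove f (x - u) ∧ tauPass f (x - u) ≤ tauPass f x ∧
    ((u < Ushoot f x ∧ v < Vshoot f x ∧ w < Oshoot f x) ↔
      (0 < Ushoot f (x - u) ∧ v - u < Vshoot f (x - u) ∧ w + u < Oshoot f (x - u))) ∧
    ((u < Ushoot f x ∧ v < Vshoot f x ∧ w < Oshoot f x) →
      tauPass f (x - u) = tauPass f x) := by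
  have hxu : 0 < x - u := sub_pos.mpr hux
  have hmono : {t : ℝ | 0 < t ∧ x < f t} ⊆ {t : ℝ | 0 < t ∧ x - u < f t} := by
    rintro t ⟨h1, h2⟩
    exact ⟨h1, by linarith⟩
  have hhit' : hitsAbove f (x - u) := hhit.mono hmono
  have hbd : ∀ y : ℝ, BddBelow {t : ℝ | 0 < t ∧ y < f t} :=
    fun y => ⟨0, fun t ht => ht.1.le⟩
  have htle : tauPass f (x - u) ≤ tauPass f x := csInf_le_csInf (hbd _) hhit hmono
  have hτx : 0 < tauPass f x := aux_tau_pos f hf0 (hf_rc 0 le_rfl) hx hhit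
  have hτxu : 0 < tauPass f (x - u) := aux_tau_pos f hf0 (hf_rc 0 le_rfl) hxu hhit'
  have hbA : BddAbove (f '' Ico 0 (tauPass f x)) := by
    refine ⟨x, ?_⟩
    rintro z ⟨s, hs, rfl⟩
    exact aux_le_on_Ico f hf0 hx s hs
  -- key: forward hypotheses imply equality of passage times
  have key : (u < Ushoot f x ∧ v < Vshoot f x ∧ w < Oshoot f x) →
      tauPass f (x - u) = tauPass f x := by
    rintro ⟨hU, hV, hO⟩
    have hsup : sSup (f '' Ico 0 (tauPass f x)) < x - u := by
      unfold Ushoot at hU; linarith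
    have hlt : ∀ s ∈ Ico (0:ℝ) (tauPass f x), f s < x - u := fun s hs =>
      lt_of_le_of_lt (le_csSup hbA (mem_image_of_mem f hs)) hsup
    have hOx : x < f (tauPass f x) := by
      unfold Oshoot at hO; linarith
    have hmem : tauPass f x ∈ {t : ℝ | 0 < t ∧ x - u < f t} := ⟨hτx, by linarith⟩
    refine le_antisymm (csInf_le (hbd _) hmem) (le_csInf hhit' ?_)
    rintro t ⟨ht0, htf⟩
    by_contra h
    push_neg at h
    exact lt_asymm htf (hlt t ⟨ht0.le, h⟩)
  refine ⟨hhit', htle, ⟨?_, ?_⟩, key⟩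
  · rintro h
    obtain ⟨hU, hV, hO⟩ := h
    have heq := key ⟨hU, hV, hO⟩
    unfold Ushoot Vshoot Oshoot at *
    rw [heq]
    refine ⟨by linarith, by linarith, by linarith⟩
  · rintro ⟨hU, hV, hO⟩
    have hOσ : x < f (tauPass f (x - u)) := by
      unfold Oshoot at hO; linarith
    have hmem : tauPass f (x - u) ∈ {t : ℝ | 0 < t ∧ x < f t} := ⟨hτxu, hOσ⟩
    have heq : tauPass f (x - u) = tauPass f x :=
      le_antisymm htle (csInf_le (hbd _) hmem)
    unfold Ushoot Vshoot Oshoot at *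
    rw [← heq]
    refine ⟨by linarith, by linarith, by linarith⟩
end

section
/- Let (Ω, F, P) be a probability space and let (Aₙ)ₙ∈ℕ and (Bₙ)ₙ∈ℕ be sequences of real-valued random variables on Ω such that Aₙ ≤ Bₙ almost surely for every n. Suppose there is a Borel probability measure μ on ℝ such that both the laws of Aₙ and the laws of Bₙ converge weakly to μ as n → ∞. Then Bₙ − Aₙ converges to 0 in probability, i.e. for every ε > 0, P(Bₙ − Aₙ > ε) → 0 as n → ∞. -/
open MeasureTheory Filter

theorem statement1 {Ω : Type*} [MeasurableSpace Ω] (P : Measure Ω) [IsProbabilityMeasure P]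
    (A B : ℕ → Ω → ℝ)
    (hA : ∀ n, Measurable (A n)) (hB : ∀ n, Measurable (B n))
    (hle : ∀ n, ∀ᵐ ω ∂P, A n ω ≤ B n ω)
    (μ : Measure ℝ) [IsProbabilityMeasure μ]
    (hAconv : ∀ g : BoundedContinuousFunction ℝ ℝ,
      Tendsto (fun n => ∫ ω, g (A n ω) ∂P) atTop (nhds (∫ x, g x ∂μ)))
    (hBconv : ∀ g : BoundedContinuousFunction ℝ ℝ,
      Tendsto (fun n => ∫ ω, g (B n ω) ∂P) atTop (nhds (∫ x, g x ∂μ))) :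
    ∀ ε : ℝ, 0 < ε →
      Tendsto (fun n => (P {ω | ε < B n ω - A n ω}).toReal) atTop (nhds 0) := by
  intro ε hε
  rw [NormedAddCommGroup.tendsto_nhds_zero]
  intro δ hδ
  set c : ℝ := min ε 1 with hc_def
  have hc : 0 < c := lt_min hε one_pos
  have hc1 : c ≤ 1 := min_le_right _ _
  have hcε : c ≤ ε := min_le_left _ _
  -- choose M such that μ of complement of [-M, M] is small
  obtain ⟨M, hM⟩ : ∃ M : ℕ, (μ (Set.Icc (-(M : ℝ)) M)ᶜ).toReal < δ / 3 := by
    have hinter : ⋂ n : ℕ, (Set.Icc (-(n : ℝ)) n)ᶜ = (∅ : Set ℝ) := by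
      ext x
      simp only [Set.mem_iInter, Set.mem_compl_iff, Set.mem_Icc, Set.mem_empty_iff_false,
        iff_false, not_forall, not_not, not_and]
      refine ⟨⌈|x|⌉₊, ?_, ?_⟩
      · have := Nat.le_ceil |x|
        have h2 := neg_abs_le x
        linarith
      · have := Nat.le_ceil |x|
        have h2 := le_abs_self x
        linarith
    have hanti : Antitone fun n : ℕ => (Set.Icc (-(n : ℝ)) n)ᶜ := by
      intro n m hnm
      apply Set.compl_subset_compl.2
      apply Set.Icc_subset_Icc
      · simp only [neg_le_neg_iff, Nat.cast_le]; exact hnm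
      · exact_mod_cast hnm
    have htend := tendsto_measure_iInter_atTop (μ := μ)
      (s := fun n : ℕ => (Set.Icc (-(n : ℝ)) n)ᶜ)
      (fun n => measurableSet_Icc.compl.nullMeasurableSet) hanti ⟨0, measure_ne_top μ _⟩
    rw [hinter, measure_empty] at htend
    have hpos : (0 : ENNReal) < ENNReal.ofReal (δ / 3) := ENNReal.ofReal_pos.mpr (by linarith)
    have hev := htend.eventually_lt_const hpos
    obtain ⟨M, hM⟩ := hev.exists
    simp only [Function.comp_apply] at hM
    exact ⟨M, ENNReal.toReal_lt_of_lt_ofReal hM⟩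
  set Mr : ℝ := (M : ℝ) with hMr
  have hMr0 : 0 ≤ Mr := Nat.cast_nonneg M
  set K : ℝ := Mr + 2 with hK_def
  have hK0 : 0 < K := by positivity
  -- the clamp function G
  set G : BoundedContinuousFunction ℝ ℝ :=
    BoundedContinuousFunction.ofNormedAddCommGroup (fun x => max (-K) (min x K))
      (continuous_const.max (continuous_id.min continuous_const)) K (fun x => by
        rw [Real.norm_eq_abs, abs_le]
        constructor
        · exact le_max_left _ _
        · exact max_le (by linarith) (min_le_right _ _)) with hG_def
  have hGcoe : ∀ x : ℝ, G x = max (-K) (min x K) := fun x => rfl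
  -- the cutoff function H
  set H : BoundedContinuousFunction ℝ ℝ :=
    BoundedContinuousFunction.ofNormedAddCommGroup (fun x => min 1 (max 0 (|x| - Mr)))
      (continuous_const.min (continuous_const.max (continuous_abs.sub continuous_const))) 1 (fun x => by
        rw [Real.norm_eq_abs, abs_le]
        constructor
        · have : (0:ℝ) ≤ min 1 (max 0 (|x| - Mr)) := le_min zero_le_one (le_max_left _ _)
          linarith
        · exact min_le_left _ _) with hH_def
  have hHcoe : ∀ x : ℝ, H x = min 1 (max 0 (|x| - Mr)) := fun x => rfl
  have hH0 : ∀ x : ℝ, 0 ≤ H x := fun x => le_min zero_le_one (le_max_left _ _)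
  have hGmono : ∀ a b : ℝ, a ≤ b → G a ≤ G b := by
    intro a b hab
    rw [hGcoe, hGcoe]
    exact max_le_max le_rfl (min_le_min hab le_rfl)
  -- G is the identity on [-K, K]
  have hGid : ∀ x : ℝ, |x| ≤ K → G x = x := by
    intro x hx
    rw [abs_le] at hx
    rw [hGcoe, min_eq_left hx.2, max_eq_right hx.1]
  -- integrability of compositions
  have hint : ∀ (g : BoundedContinuousFunction ℝ ℝ) (f : Ω → ℝ), Measurable f →
      Integrable (fun ω => g (f ω)) P := by
    intro g f hf
    refine Integrable.mono' (integrable_const ‖g‖)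
      ((g.continuous.measurable.comp hf).aestronglyMeasurable) ?_
    exact ae_of_all _ fun ω => g.norm_coe_le_norm _
  -- bound the integral of H against μ
  have hHμ : ∫ x, H x ∂μ ≤ (μ (Set.Icc (-Mr) Mr)ᶜ).toReal := by
    have hmono : ∫ x, H x ∂μ ≤ ∫ x, (Set.Icc (-Mr) Mr)ᶜ.indicator (fun _ => (1:ℝ)) x ∂μ := by
      apply integral_mono (H.integrable μ)
        ((integrable_const (1:ℝ)).indicator measurableSet_Icc.compl)
      intro x
      by_cases hx : x ∈ Set.Icc (-Mr) Mr
      · have hx' : |x| ≤ Mr := by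
          rw [abs_le]; exact ⟨hx.1, hx.2⟩
        have : H x = 0 := by
          rw [hHcoe, max_eq_left (by linarith), min_eq_right zero_le_one]
        rw [this]
        exact Set.indicator_nonneg (fun _ _ => zero_le_one) x
      · rw [Set.indicator_of_mem (Set.mem_compl hx)]
        rw [hHcoe]
        exact min_le_left _ _
    rwa [integral_indicator_const (1:ℝ) measurableSet_Icc.compl, smul_eq_mul, mul_one] at hmono
  -- the dominating sequence
  set D : ℕ → ℝ := fun n =>
    (∫ ω, G (B n ω) ∂P - ∫ ω, G (A n ω) ∂P) / c + ∫ ω, H (A n ω) ∂P with hD_def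
  have hDlim : Tendsto D atTop
      (nhds ((∫ x, G x ∂μ - ∫ x, G x ∂μ) / c + ∫ x, H x ∂μ)) :=
    (((hBconv G).sub (hAconv G)).div_const c).add (hAconv H)
  have hlim_eq : (∫ x, G x ∂μ - ∫ x, G x ∂μ) / c + ∫ x, H x ∂μ = ∫ x, H x ∂μ := by
    rw [sub_self, zero_div, zero_add]
  rw [hlim_eq] at hDlim
  have hHμδ : ∫ x, H x ∂μ < δ := by
    calc ∫ x, H x ∂μ ≤ (μ (Set.Icc (-Mr) Mr)ᶜ).toReal := hHμ
      _ < δ / 3 := hM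
      _ < δ := by linarith
  have hev : ∀ᶠ n in atTop, D n < δ := hDlim.eventually_lt_const hHμδ
  filter_upwards [hev] with n hn
  rw [Real.norm_eq_abs, abs_of_nonneg ENNReal.toReal_nonneg]
  -- per-n bound: P(E_n).toReal ≤ D n
  set f : Ω → ℝ := fun ω => (G (B n ω) - G (A n ω)) / c + H (A n ω) with hf_def
  have hfint : Integrable f P :=
    (((hint G _ (hB n)).sub (hint G _ (hA n))).div_const c).add (hint H _ (hA n))
  have hfnonneg : 0 ≤ᵐ[P] f := by
    filter_upwards [hle n] with ω hω
    exact add_nonneg (div_nonneg (sub_nonneg.2 (hGmono _ _ hω)) hc.le) (hH0 _)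
  have hsub : {ω | ε < B n ω - A n ω} ≤ᵐ[P] {ω | 1 ≤ f ω} := by
    filter_upwards [hle n] with ω hω
    show ε < B n ω - A n ω → 1 ≤ f ω
    intro hmem
    by_cases hA' : |A n ω| ≤ Mr + 1
    · have hAK : G (A n ω) = A n ω := hGid _ (by rw [hK_def]; linarith)
      have habs : |A n ω + c| ≤ K := by
        rw [abs_le] at hA' ⊢
        constructor <;> [skip; skip] <;> rw [hK_def] <;> linarith [hA'.1, hA'.2]
      have hBc : A n ω + c ≤ G (B n ω) := by
        calc A n ω + c = G (A n ω + c) := (hGid _ habs).symm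
          _ ≤ G (B n ω) := hGmono _ _ (by linarith)
      have h1 : 1 ≤ (G (B n ω) - G (A n ω)) / c := by
        rw [le_div_iff₀ hc, one_mul, hAK]
        linarith
      have := hH0 (A n ω)
      simp only [hf_def]
      linarith
    · push_neg at hA'
      have hH1 : H (A n ω) = 1 := by
        rw [hHcoe]
        rw [min_eq_left]
        exact le_max_of_le_right (by linarith)
      have hG : 0 ≤ (G (B n ω) - G (A n ω)) / c :=
        div_nonneg (sub_nonneg.2 (hGmono _ _ hω)) hc.le
      simp only [hf_def]
      linarith
  have h1 : P {ω | ε < B n ω - A n ω} ≤ P {ω | 1 ≤ f ω} := measure_mono_ae hsub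
  have h2 := mul_meas_ge_le_integral_of_nonneg hfnonneg hfint 1
  rw [one_mul] at h2
  have hsubint : Integrable (fun ω => (G (B n ω) - G (A n ω)) / c) P :=
    ((hint G _ (hB n)).sub (hint G _ (hA n))).div_const c
  have h3 : ∫ ω, f ω ∂P = D n := by
    simp only [hf_def, hD_def]
    rw [integral_add hsubint (hint H _ (hA n)), integral_div,
      integral_sub (hint G _ (hB n)) (hint G _ (hA n))]
  calc (P {ω | ε < B n ω - A n ω}).toReal
      ≤ (P {ω | 1 ≤ f ω}).toReal := ENNReal.toReal_mono (measure_ne_top _ _) h1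
    _ ≤ ∫ ω, f ω ∂P := h2
    _ = D n := h3
    _ < δ := hn
end

section
/- For all real numbers α ∈ (0,1), a > 0 and b > 0, one has ∫₀¹ y^{α−1} (a + max(1−y, b))^{−α} dy = ∫_b^∞ (1 − (max(1−v, 0))^α) (v+a)^{−(α+1)} dv. -/
open MeasureTheory Real Set Filter Topology intervalIntegral

lemma tail_lemma (α : ℝ) (hα : 0 < α) (a c : ℝ) (hc : 0 < c + a) :
    IntegrableOn (fun v : ℝ => (v + a) ^ (-(α+1))) (Ioi c) ∧
    ∫ v in Ioi c, (v + a) ^ (-(α+1)) = (c+a)^(-α) / α := by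
  have hderiv : ∀ x ∈ Ici c, HasDerivAt (fun v : ℝ => -(v+a)^(-α)/α) ((x+a)^(-(α+1))) x := by
    intro x hx
    have hxa : 0 < x + a := by have := hx.out; linarith
    have h1 : HasDerivAt (fun v : ℝ => v + a) 1 x := (hasDerivAt_id x).add_const a
    have h2 := (h1.rpow_const (p := -α) (Or.inl hxa.ne')).neg.div_const α
    convert h2 using 1
    case e'_4 => rfl
    case e'_5 => rfl
    case e'_8 => rfl
    rw [show -α - 1 = -(α+1) by ring]
    field_simp
  have hpos : ∀ x ∈ Ioi c, 0 ≤ (x+a)^(-(α+1)) := fun x hx => by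
    have hxa : 0 < x + a := by have := hx.out; linarith
    positivity
  have htend : Tendsto (fun v : ℝ => -(v+a)^(-α)/α) atTop (𝓝 0) := by
    have h1 : Tendsto (fun v : ℝ => v + a) atTop atTop := tendsto_atTop_add_const_right _ a tendsto_id
    have := ((tendsto_rpow_neg_atTop hα).comp h1).neg.div_const α
    simpa using this
  refine ⟨integrableOn_Ioi_deriv_of_nonneg' hderiv hpos htend, ?_⟩
  rw [integral_Ioi_of_hasDerivAt_of_nonneg' hderiv hpos htend]
  ring

lemma ftc2 (α : ℝ) (hα : 0 < α) (a : ℝ) {p q : ℝ} (hpq : p ≤ q) (hp : 0 < p + a) :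
    ∫ v in p..q, (v+a)^(-(α+1)) = (p+a)^(-α)/α - (q+a)^(-α)/α := by
  have hpos : ∀ x ∈ Icc p q, 0 < x + a := fun x hx => by have := hx.1; linarith
  have hderiv : ∀ x ∈ Ioo p q, HasDerivAt (fun v : ℝ => -(v+a)^(-α)/α) ((x+a)^(-(α+1))) x := by
    intro x hx
    have hxa : 0 < x + a := hpos x (Ioo_subset_Icc_self hx)
    have h1 : HasDerivAt (fun v : ℝ => v + a) 1 x := (hasDerivAt_id x).add_const a
    have h2 := (h1.rpow_const (p := -α) (Or.inl hxa.ne')).neg.div_const α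
    convert h2 using 1
    case e'_4 => rfl
    case e'_5 => rfl
    case e'_8 => rfl
    rw [show -α - 1 = -(α+1) by ring]
    field_simp
  have hcont : ContinuousOn (fun v : ℝ => -(v+a)^(-α)/α) (Icc p q) := by
    refine (((continuousOn_id.add continuousOn_const).rpow_const ?_).neg).div_const α
    exact fun x hx => Or.inl (hpos x hx).ne'
  have hint : IntervalIntegrable (fun v : ℝ => (v+a)^(-(α+1))) volume p q := by
    apply ContinuousOn.intervalIntegrable
    refine (continuousOn_id.add continuousOn_const).rpow_const ?_
    rw [uIcc_of_le hpq]
    exact fun x hx => Or.inl (hpos x hx).ne'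
  rw [intervalIntegral.integral_eq_sub_of_hasDerivAt_of_le hpq hcont hderiv hint]
  ring

lemma ftc1 (α : ℝ) (hα : 0 < α) (a : ℝ) (ha : 0 < a) {c : ℝ}
    (hc : 0 < c) (hc1 : c ≤ 1) :
    ∫ y in (0:ℝ)..c, (y^(α-1) * (a+1-y)^(-α) + y^α * (a+1-y)^(-(α+1)))
      = c^α * (a+1-c)^(-α) / α := by
  have hpos : ∀ x ∈ Icc (0:ℝ) c, 0 < a + 1 - x := fun x hx => by
    have := hx.2; linarith
  have hderiv : ∀ x ∈ Ioo (0:ℝ) c, HasDerivAt (fun y : ℝ => y^α * (a+1-y)^(-α) / α)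
      (x^(α-1) * (a+1-x)^(-α) + x^α * (a+1-x)^(-(α+1))) x := by
    intro x hx
    have hx0 : (0:ℝ) < x := hx.1
    have hxa : 0 < a + 1 - x := hpos x (Ioo_subset_Icc_self hx)
    have h1 : HasDerivAt (fun y : ℝ => y^α) (1 * α * x^(α-1)) x :=
      (hasDerivAt_id x).rpow_const (p := α) (Or.inl hx0.ne')
    have h2 : HasDerivAt (fun y : ℝ => a + 1 - y) (-1) x := by
      simpa using ((hasDerivAt_id x).const_sub (a+1))
    have h3 := h2.rpow_const (p := -α) (Or.inl hxa.ne')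
    have h4 := (h1.mul h3).div_const α
    convert h4 using 1
    case e'_4 => rfl
    case e'_5 => rfl
    case e'_8 => rfl
    rw [show -α - 1 = -(α+1) by ring]
    field_simp
  have hcont : ContinuousOn (fun y : ℝ => y^α * (a+1-y)^(-α) / α) (Icc 0 c) := by
    refine ((continuousOn_id.rpow_const fun x _ => Or.inr hα.le).mul
      ((continuousOn_const.sub continuousOn_id).rpow_const
        fun x hx => Or.inl (hpos x hx).ne')).div_const α
  have hint : IntervalIntegrable
      (fun y : ℝ => y^(α-1) * (a+1-y)^(-α) + y^α * (a+1-y)^(-(α+1))) volume 0 c := by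
    apply IntervalIntegrable.add
    · refine (intervalIntegrable_rpow' (by linarith)).mul_continuousOn ?_
      refine (continuousOn_const.sub continuousOn_id).rpow_const fun x hx => Or.inl ?_
      rw [uIcc_of_le hc.le] at hx
      exact (hpos x hx).ne'
    · apply ContinuousOn.intervalIntegrable
      refine (continuousOn_id.rpow_const fun x _ => Or.inr hα.le).mul
        ((continuousOn_const.sub continuousOn_id).rpow_const fun x hx => Or.inl ?_)
      rw [uIcc_of_le hc.le] at hx
      exact (hpos x hx).ne'
  rw [intervalIntegral.integral_eq_sub_of_hasDerivAt_of_le hc.le hcont hderiv hint,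
    Real.zero_rpow hα.ne']
  ring

theorem statement5 (α a b : ℝ) (hα : 0 < α) (hα1 : α < 1) (ha : 0 < a) (hb : 0 < b) :
    (∫ y in Ioo (0:ℝ) 1, y ^ (α - 1) * (a + max (1 - y) b) ^ (-α))
      = ∫ v in Ioi b, (1 - (max (1 - v) 0) ^ α) * (v + a) ^ (-(α + 1)) := by
  rcases le_or_gt 1 b with hb1 | hb1
  · -- case 1 ≤ b : both sides equal (a+b)^(-α)/α
    have hL : (∫ y in Ioo (0:ℝ) 1, y ^ (α - 1) * (a + max (1 - y) b) ^ (-α))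
        = (∫ y in Ioo (0:ℝ) 1, y ^ (α - 1)) * (a + b) ^ (-α) := by
      rw [← MeasureTheory.integral_mul_const]
      apply setIntegral_congr_fun measurableSet_Ioo
      intro y hy
      dsimp only
      rw [max_eq_right (by linarith [hy.1] : 1 - y ≤ b)]
    have hI : (∫ y in Ioo (0:ℝ) 1, y ^ (α - 1)) = 1/α := by
      rw [← integral_Ioc_eq_integral_Ioo, ← intervalIntegral.integral_of_le zero_le_one,
        integral_rpow (Or.inl (by linarith)), show α - 1 + 1 = α by ring,
        Real.one_rpow, Real.zero_rpow hα.ne']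
      ring
    have hR : (∫ v in Ioi b, (1 - (max (1 - v) 0) ^ α) * (v + a) ^ (-(α + 1)))
        = ∫ v in Ioi b, (v + a) ^ (-(α+1)) := by
      apply setIntegral_congr_fun measurableSet_Ioi
      intro v hv
      dsimp only
      rw [max_eq_right (by linarith [hv.out] : 1 - v ≤ 0), Real.zero_rpow hα.ne',
        sub_zero, one_mul]
    rw [hL, hI, hR, (tail_lemma α hα a b (by linarith)).2, add_comm b a]
    ring
  · -- case b < 1
    have hc : 0 < 1 - b := by linarith
    -- LHS split
    have hgcont : Continuous (fun y : ℝ => (a + max (1 - y) b) ^ (-α)) := by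
      apply Continuous.rpow_const
      · exact continuous_const.add ((continuous_const.sub continuous_id).max continuous_const)
      · intro x
        have h := le_max_right (1 - x) b
        exact Or.inl (by linarith : (0:ℝ) < a + max (1-x) b).ne'
    have hi1 : IntervalIntegrable (fun y : ℝ => y ^ (α-1) * (a + max (1-y) b) ^ (-α))
        volume 0 (1-b) :=
      (intervalIntegrable_rpow' (by linarith)).mul_continuousOn hgcont.continuousOn
    have hi2 : IntervalIntegrable (fun y : ℝ => y ^ (α-1) * (a + max (1-y) b) ^ (-α))
        volume (1-b) 1 := by
      apply ContinuousOn.intervalIntegrable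
      refine ContinuousOn.mul ?_ hgcont.continuousOn
      refine continuousOn_id.rpow_const fun x hx => Or.inl ?_
      rw [uIcc_of_le (by linarith : (1:ℝ) - b ≤ 1)] at hx
      exact (by linarith [hx.1] : (0:ℝ) < x).ne'
    have hLsplit : (∫ y in Ioo (0:ℝ) 1, y ^ (α - 1) * (a + max (1 - y) b) ^ (-α))
        = (∫ y in (0:ℝ)..(1-b), y ^ (α-1) * (a + max (1-y) b) ^ (-α))
          + ∫ y in (1-b)..(1:ℝ), y ^ (α-1) * (a + max (1-y) b) ^ (-α) := by
      rw [← integral_Ioc_eq_integral_Ioo, ← intervalIntegral.integral_of_le zero_le_one,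
        ← intervalIntegral.integral_add_adjacent_intervals hi1 hi2]
    have hA : (∫ y in (0:ℝ)..(1-b), y ^ (α-1) * (a + max (1-y) b) ^ (-α))
        = ∫ y in (0:ℝ)..(1-b), y^(α-1) * (a+1-y)^(-α) := by
      apply intervalIntegral.integral_congr
      intro y hy
      rw [uIcc_of_le hc.le] at hy
      dsimp only
      rw [max_eq_left (by linarith [hy.2] : b ≤ 1 - y),
        show a + (1 - y) = a + 1 - y by ring]
    have hB : (∫ y in (1-b)..(1:ℝ), y ^ (α-1) * (a + max (1-y) b) ^ (-α))
        = (1 - (1-b)^α)/α * (a+b)^(-α) := by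
      have e : (∫ y in (1-b)..(1:ℝ), y ^ (α-1) * (a + max (1-y) b) ^ (-α))
          = ∫ y in (1-b)..(1:ℝ), y^(α-1) * (a+b)^(-α) := by
        apply intervalIntegral.integral_congr
        intro y hy
        rw [uIcc_of_le (by linarith : (1:ℝ) - b ≤ 1)] at hy
        dsimp only
        rw [max_eq_right (by linarith [hy.1] : 1 - y ≤ b)]
      rw [e, intervalIntegral.integral_mul_const, integral_rpow (Or.inl (by linarith)),
        show α - 1 + 1 = α by ring, Real.one_rpow]
    -- RHS split
    have htail := tail_lemma α hα a 1 (by linarith)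
    have hRint2 : IntegrableOn
        (fun v : ℝ => (1 - (max (1 - v) 0) ^ α) * (v + a) ^ (-(α + 1))) (Ioi 1) := by
      apply htail.1.congr_fun ?_ measurableSet_Ioi
      intro v hv
      dsimp only
      rw [max_eq_right (by linarith [hv.out] : 1 - v ≤ 0), Real.zero_rpow hα.ne',
        sub_zero, one_mul]
    have hRcont : ContinuousOn
        (fun v : ℝ => (1 - (max (1 - v) 0) ^ α) * (v + a) ^ (-(α + 1))) (Icc b 1) := by
      refine ContinuousOn.mul ?_ ?_
      · exact (continuous_const.sub
          (((continuous_const.sub continuous_id).max continuous_const).rpow_const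
            fun x => Or.inr hα.le)).continuousOn
      · refine (continuousOn_id.add continuousOn_const).rpow_const fun x hx => Or.inl ?_
        exact (by linarith [hx.1] : (0:ℝ) < x + a).ne'
    have hRint1 : IntegrableOn
        (fun v : ℝ => (1 - (max (1 - v) 0) ^ α) * (v + a) ^ (-(α + 1))) (Ioc b 1) :=
      (hRcont.integrableOn_Icc).mono_set Ioc_subset_Icc_self
    have hRsplit : (∫ v in Ioi b, (1 - (max (1 - v) 0) ^ α) * (v + a) ^ (-(α + 1)))
        = (∫ v in Ioc b 1, (1 - (max (1 - v) 0) ^ α) * (v + a) ^ (-(α + 1)))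
          + ∫ v in Ioi 1, (1 - (max (1 - v) 0) ^ α) * (v + a) ^ (-(α + 1)) := by
      rw [← Ioc_union_Ioi_eq_Ioi hb1.le,
        setIntegral_union (Ioc_disjoint_Ioi le_rfl) measurableSet_Ioi hRint1 hRint2]
    have hR2 : (∫ v in Ioi (1:ℝ), (1 - (max (1 - v) 0) ^ α) * (v + a) ^ (-(α + 1)))
        = (1+a)^(-α)/α := by
      have heq : EqOn (fun v : ℝ => (1 - (max (1 - v) 0) ^ α) * (v + a) ^ (-(α + 1)))
          (fun v : ℝ => (v+a)^(-(α+1))) (Ioi 1) := by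
        intro v hv
        dsimp only
        rw [max_eq_right (by linarith [hv.out] : 1 - v ≤ 0), Real.zero_rpow hα.ne',
          sub_zero, one_mul]
      rw [setIntegral_congr_fun measurableSet_Ioi heq]
      exact htail.2
    have hR1 : (∫ v in Ioc b 1, (1 - (max (1 - v) 0) ^ α) * (v + a) ^ (-(α + 1)))
        = ((b+a)^(-α)/α - (1+a)^(-α)/α)
          - ∫ y in (0:ℝ)..(1-b), y^α*(a+1-y)^(-(α+1)) := by
      rw [← intervalIntegral.integral_of_le hb1.le]
      have e1 : (∫ v in b..(1:ℝ), (1 - (max (1 - v) 0) ^ α) * (v + a) ^ (-(α + 1)))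
          = ∫ v in b..(1:ℝ),
              ((v+a)^(-(α+1)) - (fun y : ℝ => y^α * (a+1-y)^(-(α+1))) (1 - v)) := by
        apply intervalIntegral.integral_congr
        intro v hv
        rw [uIcc_of_le hb1.le] at hv
        dsimp only
        rw [max_eq_left (by linarith [hv.2] : (0:ℝ) ≤ 1 - v),
          show a + 1 - (1 - v) = v + a by ring]
        ring
      have int1 : IntervalIntegrable (fun v : ℝ => (v+a)^(-(α+1))) volume b 1 := by
        apply ContinuousOn.intervalIntegrable
        refine (continuousOn_id.add continuousOn_const).rpow_const fun x hx => Or.inl ?_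
        rw [uIcc_of_le hb1.le] at hx
        exact (by linarith [hx.1] : (0:ℝ) < x + a).ne'
      have int2 : IntervalIntegrable
          (fun v : ℝ => (fun y : ℝ => y^α * (a+1-y)^(-(α+1))) (1 - v)) volume b 1 := by
        apply ContinuousOn.intervalIntegrable
        simp only
        refine ContinuousOn.mul ?_ ?_
        · exact (continuousOn_const.sub continuousOn_id).rpow_const fun x _ => Or.inr hα.le
        · refine ContinuousOn.rpow_const ?_ fun x hx => Or.inl ?_
          · exact continuousOn_const.sub (continuousOn_const.sub continuousOn_id)
          · rw [uIcc_of_le hb1.le] at hx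
            exact (by linarith [hx.1] : (0:ℝ) < a + 1 - (1 - x)).ne'
      rw [e1, intervalIntegral.integral_sub int1 int2,
        ftc2 α hα a hb1.le (by linarith),
        intervalIntegral.integral_comp_sub_left (fun y : ℝ => y^α * (a+1-y)^(-(α+1))) 1,
        show (1:ℝ) - 1 = 0 by ring]
    -- key FTC identity
    have ia : IntervalIntegrable (fun y : ℝ => y^(α-1) * (a+1-y)^(-α)) volume 0 (1-b) := by
      refine (intervalIntegrable_rpow' (by linarith)).mul_continuousOn ?_
      refine (continuousOn_const.sub continuousOn_id).rpow_const fun x hx => Or.inl ?_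
      rw [uIcc_of_le hc.le] at hx
      exact (by linarith [hx.2] : (0:ℝ) < a + 1 - x).ne'
    have ib : IntervalIntegrable (fun y : ℝ => y^α * (a+1-y)^(-(α+1))) volume 0 (1-b) := by
      apply ContinuousOn.intervalIntegrable
      refine (continuousOn_id.rpow_const fun x _ => Or.inr hα.le).mul
        ((continuousOn_const.sub continuousOn_id).rpow_const fun x hx => Or.inl ?_)
      rw [uIcc_of_le hc.le] at hx
      exact (by linarith [hx.2] : (0:ℝ) < a + 1 - x).ne'
    have hkey : (∫ y in (0:ℝ)..(1-b), y^(α-1)*(a+1-y)^(-α))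
        + (∫ y in (0:ℝ)..(1-b), y^α*(a+1-y)^(-(α+1)))
        = (1-b)^α * (a+b)^(-α)/α := by
      rw [← intervalIntegral.integral_add ia ib]
      have h := ftc1 α hα a ha hc (by linarith : (1:ℝ) - b ≤ 1)
      rw [show a + 1 - (1 - b) = a + b by ring] at h
      exact h
    rw [hLsplit, hA, hB, hRsplit, hR1, hR2, add_comm b a]
    have hα' : α ≠ 0 := hα.ne'
    linear_combination hkey
end

section
/- For all real numbers a, b with 0 < a < 1, 0 < b < 1, and every x > 0, the triple integral ∫₀ˣ ∫₀^∞ ∫₀^w (x−y)^{a−1} (w−u)^{b−1} (w+y)^{−(a+b+1)} du dw dy equals π Γ(a) Γ(b) / (sin(πa) Γ(a+b+1)); in particular the value does not depend on x. -/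
open MeasureTheory Real Set

theorem realBeta {p q : ℝ} (hp : 0 < p) (hq : 0 < q) :
    ∫ t in Ioo (0:ℝ) 1, t ^ (p - 1) * (1 - t) ^ (q - 1)
      = Gamma p * Gamma q / Gamma (p + q) := by
  have hC := Complex.Gamma_mul_Gamma_eq_betaIntegral (s := (p:ℂ)) (t := (q:ℂ))
    (by simpa using hp) (by simpa using hq)
  have hbeta : Complex.betaIntegral p q
      = ((∫ t in Ioo (0:ℝ) 1, t ^ (p - 1) * (1 - t) ^ (q - 1) : ℝ) : ℂ) := by
    rw [Complex.betaIntegral, intervalIntegral.integral_of_le zero_le_one,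
      integral_Ioc_eq_integral_Ioo]
    rw [show ((∫ t in Ioo (0:ℝ) 1, t ^ (p - 1) * (1 - t) ^ (q - 1) : ℝ) : ℂ)
        = ∫ t in Ioo (0:ℝ) 1, ((t ^ (p - 1) * (1 - t) ^ (q - 1) : ℝ) : ℂ) from
      (integral_ofReal).symm]
    refine setIntegral_congr_fun measurableSet_Ioo fun t ht => ?_
    push_cast
    rw [Complex.ofReal_cpow ht.1.le, Complex.ofReal_cpow (by linarith [ht.2])]
    push_cast
    ring
  rw [hbeta, Complex.Gamma_ofReal, Complex.Gamma_ofReal, ← Complex.ofReal_add,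
    Complex.Gamma_ofReal] at hC
  norm_cast at hC
  rw [eq_div_iff (Gamma_pos_of_pos (show (0:ℝ) < p + q by linarith)).ne', mul_comm]
  exact hC.symm

theorem lemA {b w : ℝ} (hb : 0 < b) (hw : 0 < w) :
    ∫ u in Ioo (0:ℝ) w, (w - u) ^ (b - 1) = w ^ b / b := by
  rw [← integral_Ioc_eq_integral_Ioo, ← intervalIntegral.integral_of_le hw.le,
    intervalIntegral.integral_comp_sub_left (fun t => t ^ (b - 1)) w]
  simp only [sub_self, sub_zero]
  rw [integral_rpow (Or.inl (by linarith))]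
  rw [zero_rpow (by linarith), sub_add_cancel]
  ring

theorem lemB2 {a b : ℝ} (ha : 0 < a) (hb : 0 < b) :
    ∫ s in Ioi (0:ℝ), s ^ b * (1 + s) ^ (-(a + b + 1))
      = Gamma (b+1) * Gamma a / Gamma (a + b + 1) := by
  have himg : (fun t : ℝ => t / (1 - t)) '' Ioo 0 1 = Ioi 0 := by
    ext z
    simp only [mem_image, mem_Ioo, mem_Ioi]
    constructor
    · rintro ⟨t, ⟨ht0, ht1⟩, rfl⟩
      have : 0 < 1 - t := by linarith
      positivity
    · intro hz
      refine ⟨z / (1 + z), ⟨by positivity, ?_⟩, ?_⟩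
      · rw [div_lt_one (by linarith)]; linarith
      · have h : 1 - z / (1 + z) = 1 / (1 + z) := by field_simp; ring
        rw [h]
        field_simp
  have hderiv : ∀ t ∈ Ioo (0:ℝ) 1, HasDerivWithinAt (fun t : ℝ => t / (1 - t))
      (((1 - t) ^ 2)⁻¹) (Ioo 0 1) t := by
    intro t ht
    simp only [mem_Ioo] at ht
    have h1 : (1:ℝ) - t ≠ 0 := by intro h; rw [sub_eq_zero] at h; exact absurd h.symm ht.2.ne
    have H := (hasDerivAt_id t).div ((hasDerivAt_const t (1:ℝ)).sub (hasDerivAt_id t)) h1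
    simp only [id_eq] at H
    convert H.hasDerivWithinAt using 1
    · rfl
    · rfl
    · rfl
    · show ((1 - t) ^ 2)⁻¹ = (1 * (1 - t) - t * (0 - 1)) / (1 - t) ^ 2
      ring
  have hinj : InjOn (fun t : ℝ => t / (1 - t)) (Ioo 0 1) := by
    intro t1 h1 t2 h2 heq
    simp only [mem_Ioo] at h1 h2
    have e1 : (1:ℝ) - t1 ≠ 0 := by intro h; rw [sub_eq_zero] at h; exact absurd h.symm h1.2.ne
    have e2 : (1:ℝ) - t2 ≠ 0 := by intro h; rw [sub_eq_zero] at h; exact absurd h.symm h2.2.ne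
    field_simp at heq
    nlinarith [heq]
  rw [← himg, integral_image_eq_integral_abs_deriv_smul measurableSet_Ioo hderiv hinj]
  have hG : Gamma (b+1) * Gamma a / Gamma (a+b+1)
      = Gamma (b+1) * Gamma a / Gamma ((b+1) + a) := by
    rw [show (b+1)+a = a+b+1 from by ring]
  rw [hG, ← realBeta (by linarith : (0:ℝ) < b + 1) ha]
  refine setIntegral_congr_fun measurableSet_Ioo fun t ht => ?_
  simp only [mem_Ioo] at ht
  have h1t : 0 < 1 - t := by linarith
  have h1f : 1 + t / (1 - t) = (1 - t)⁻¹ := by field_simp; ring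
  have e1 : (((1 - t) ^ 2)⁻¹ : ℝ) = (1 - t) ^ (-2 : ℝ) := by
    rw [← rpow_natCast (1 - t) 2, ← rpow_neg h1t.le]; norm_num
  have e2 : (1 + t / (1 - t)) ^ (-(a + b + 1)) = (1 - t) ^ (a + b + 1) := by
    rw [h1f, ← rpow_neg_one (1 - t), ← rpow_mul h1t.le]
    norm_num
  have e3 : (t / (1 - t)) ^ b = t ^ b * (1 - t) ^ (-b) := by
    rw [div_rpow ht.1.le h1t.le, rpow_neg h1t.le, div_eq_mul_inv]
  have key : (1 - t) ^ (-2:ℝ) * ((1 - t) ^ (-b) * (1 - t) ^ (a + b + 1))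
      = (1 - t) ^ (a - 1) := by
    rw [← rpow_add h1t, ← rpow_add h1t]
    norm_num
    ring_nf
  rw [abs_of_pos (by positivity), smul_eq_mul, e1, e2, e3,
    show (b + 1 - 1) = b from by ring, ← key]
  ring

theorem lemB {a b y : ℝ} (ha : 0 < a) (hb : 0 < b) (hy : 0 < y) :
    ∫ w in Ioi (0:ℝ), w ^ b * (w + y) ^ (-(a + b + 1))
      = y ^ (-a) * (Gamma (b+1) * Gamma a / Gamma (a + b + 1)) := by
  have h := integral_comp_mul_left_Ioi
    (fun w : ℝ => w ^ b * (w + y) ^ (-(a + b + 1))) 0 hy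
  rw [mul_zero] at h
  have h2 : (∫ s in Ioi (0:ℝ),
      (y * s) ^ b * (y * s + y) ^ (-(a + b + 1)))
      = y ^ (b - (a + b + 1)) * ∫ s in Ioi (0:ℝ), s ^ b * (1 + s) ^ (-(a + b + 1)) := by
    rw [← integral_const_mul]
    refine setIntegral_congr_fun measurableSet_Ioi fun s hs => ?_
    have hs' : (0:ℝ) < s := hs
    rw [show y * s + y = y * (1 + s) from by ring, mul_rpow hy.le hs'.le,
      mul_rpow hy.le (by linarith : (0:ℝ) ≤ 1 + s),
      show b - (a+b+1) = b + -(a+b+1) from by ring, rpow_add hy]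
    ring
  rw [h2] at h
  have := congrArg (fun z => y • z) h
  simp only [smul_smul, mul_inv_cancel₀ hy.ne', one_smul] at this
  rw [← this, smul_eq_mul, ← mul_assoc,
    ← rpow_one_add' hy.le (by rw [show 1 + (b - (a+b+1)) = -a from by ring]; exact neg_ne_zero.mpr ha.ne'),
    show 1 + (b - (a+b+1)) = -a from by ring, lemB2 ha hb]

theorem lemC {a x : ℝ} (ha : 0 < a) (ha1 : a < 1) (hx : 0 < x) :
    ∫ y in Ioo (0:ℝ) x, (x - y) ^ (a - 1) * y ^ (-a) = π / Real.sin (π * a) := by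
  have h := intervalIntegral.mul_integral_comp_mul_left
    (f := fun y : ℝ => (x - y) ^ (a - 1) * y ^ (-a)) (a := (0:ℝ)) (b := 1) (c := x)
  rw [mul_zero, mul_one] at h
  rw [← integral_Ioc_eq_integral_Ioo, ← intervalIntegral.integral_of_le hx.le, ← h]
  have h2 : (∫ t in (0:ℝ)..1, (x - x * t) ^ (a - 1) * (x * t) ^ (-a))
      = ∫ t in Ioo (0:ℝ) 1, x⁻¹ * (t ^ ((1 - a) - 1) * (1 - t) ^ (a - 1)) := by
    rw [intervalIntegral.integral_of_le zero_le_one, integral_Ioc_eq_integral_Ioo]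
    refine setIntegral_congr_fun measurableSet_Ioo fun t ht => ?_
    simp only [mem_Ioo] at ht
    have h1t : 0 < 1 - t := by linarith
    rw [show x - x * t = x * (1 - t) from by ring, mul_rpow hx.le h1t.le,
      mul_rpow hx.le ht.1.le, show (1 - a) - 1 = -a from by ring,
      show (a - 1 : ℝ) = a - 1 from rfl]
    have hxa : x ^ (a - 1) * x ^ (-a) = x⁻¹ := by
      rw [← rpow_add hx, show a - 1 + -a = -1 from by ring, rpow_neg_one]
    calc x ^ (a-1) * (1-t) ^ (a-1) * (x ^ (-a) * t ^ (-a))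
        = (x ^ (a-1) * x ^ (-a)) * (t ^ (-a) * (1-t) ^ (a-1)) := by ring
      _ = x⁻¹ * (t ^ (-a) * (1 - t) ^ (a-1)) := by rw [hxa]
  rw [h2, integral_const_mul, realBeta (by linarith) ha, ← mul_assoc,
    mul_inv_cancel₀ hx.ne', one_mul, show (1 - a) + a = 1 from by ring, Gamma_one,
    div_one, mul_comm, Gamma_mul_Gamma_one_sub]


theorem statement7 (a b x : ℝ) (ha : 0 < a) (ha1 : a < 1) (hb : 0 < b) (hb1 : b < 1)
    (hx : 0 < x) :
    (∫ y in Ioo (0:ℝ) x, ∫ w in Ioi (0:ℝ), ∫ u in Ioo (0:ℝ) w,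
        (x - y) ^ (a - 1) * (w - u) ^ (b - 1) * (w + y) ^ (-(a + b + 1)))
      = π * Gamma a * Gamma b / (Real.sin (π * a) * Gamma (a + b + 1)) := by
  set K : ℝ := Gamma (b+1) * Gamma a / Gamma (a + b + 1) with hK
  have step : ∀ y ∈ Ioo (0:ℝ) x,
      (∫ w in Ioi (0:ℝ), ∫ u in Ioo (0:ℝ) w,
        (x - y) ^ (a - 1) * (w - u) ^ (b - 1) * (w + y) ^ (-(a + b + 1)))
      = (K / b) * ((x - y) ^ (a - 1) * y ^ (-a)) := by
    intro y hy
    simp only [mem_Ioo] at hy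
    have h1 : (∫ w in Ioi (0:ℝ), ∫ u in Ioo (0:ℝ) w,
        (x - y) ^ (a - 1) * (w - u) ^ (b - 1) * (w + y) ^ (-(a + b + 1)))
        = ∫ w in Ioi (0:ℝ), ((x - y) ^ (a - 1) / b) * (w ^ b * (w + y) ^ (-(a + b + 1))) := by
      refine setIntegral_congr_fun measurableSet_Ioi fun w hw => ?_
      have hw' : (0:ℝ) < w := hw
      have hin : (∫ u in Ioo (0:ℝ) w,
          (x - y) ^ (a - 1) * (w - u) ^ (b - 1) * (w + y) ^ (-(a + b + 1)))
          = ((x - y) ^ (a - 1) * (w + y) ^ (-(a + b + 1))) *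
            ∫ u in Ioo (0:ℝ) w, (w - u) ^ (b - 1) := by
        rw [← integral_const_mul]
        refine setIntegral_congr_fun measurableSet_Ioo fun u hu => ?_
        ring
      rw [hin, lemA hb hw']
      ring
    rw [h1, integral_const_mul, lemB ha hb hy.1]
    rw [hK]
    ring
  rw [setIntegral_congr_fun measurableSet_Ioo step, integral_const_mul, lemC ha ha1 hx]
  have hGb : Gamma (b+1) = b * Gamma b := by
    rw [Gamma_add_one hb.ne']
  have hs : Real.sin (π * a) ≠ 0 := by
    have : 0 < Real.sin (π * a) := by
      apply Real.sin_pos_of_pos_of_lt_pi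
      · positivity
      · nlinarith [Real.pi_pos]
    exact this.ne'
  have hG : Gamma (a + b + 1) ≠ 0 := (Gamma_pos_of_pos (by linarith)).ne'
  rw [hK, hGb]
  field_simp
end

section
/- For all real numbers a, b with 0 < a < 1, 0 < b < 1, and all x, z > 0, the quadruple integral ∫₀^{min(z,x)} ∫₀^{x−v} ∫₀^∞ ∫₀^w (z−v)^{b−1} (x−v−y)^{a−1} (w−u)^{b−1} (w+y)^{−(a+b+1)} du dw dy dv equals [π Γ(a) Γ(b) / (sin(πa) Γ(a+b+1))] · (z^b − (z − min(z,x))^b)/b. -/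
open MeasureTheory Real Set

lemma beta_real' {p q : ℝ} (hp : 0 < p) (hq : 0 < q) :
    ∫ t in (0:ℝ)..1, t ^ (p - 1) * (1 - t) ^ (q - 1) = Gamma p * Gamma q / Gamma (p + q) := by
  have h := Complex.Gamma_mul_Gamma_eq_betaIntegral (s := (p : ℂ)) (t := (q : ℂ))
    (by simpa using hp) (by simpa using hq)
  have hI : Complex.betaIntegral p q
      = ((∫ t in (0:ℝ)..1, t ^ (p - 1) * (1 - t) ^ (q - 1) : ℝ) : ℂ) := by
    rw [Complex.betaIntegral, ← intervalIntegral.integral_ofReal]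
    refine intervalIntegral.integral_congr fun t ht => ?_
    rw [uIcc_of_le zero_le_one] at ht
    push_cast
    rw [Complex.ofReal_cpow ht.1, Complex.ofReal_cpow (by linarith [ht.2])]
    push_cast
    ring
  rw [hI] at h
  have hGam : ∀ r : ℝ, Complex.Gamma (r : ℂ) = (Gamma r : ℂ) := fun r => Complex.Gamma_ofReal r
  rw [show ((p:ℂ) + q) = ((p + q : ℝ) : ℂ) by push_cast; ring] at h
  rw [hGam, hGam, hGam] at h
  have h2 : ((Gamma p * Gamma q : ℝ) : ℂ) = ((Gamma (p + q) * ∫ t in (0:ℝ)..1, t ^ (p - 1) * (1 - t) ^ (q - 1) : ℝ) : ℂ) := by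
    push_cast; exact h
  have h3 := Complex.ofReal_injective h2
  have hne : Gamma (p + q) ≠ 0 := (Gamma_pos_of_pos (by linarith)).ne'
  field_simp
  linarith [h3]

lemma beta_Ioi' {a b : ℝ} (ha : 0 < a) (hb : 0 < b) :
    ∫ t in Ioi (0:ℝ), t ^ b * (1 + t) ^ (-(a + b + 1))
      = Gamma (b + 1) * Gamma a / Gamma (a + b + 1) := by
  have himg : (fun s : ℝ => s / (1 - s)) '' Ioo 0 1 = Ioi 0 := by
    ext t
    constructor
    · rintro ⟨s, ⟨hs0, hs1⟩, rfl⟩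
      exact div_pos hs0 (by linarith)
    · intro ht
      refine ⟨t / (1 + t), ⟨div_pos ht (by linarith [mem_Ioi.mp ht]), ?_⟩, ?_⟩
      · rw [div_lt_one (by linarith [mem_Ioi.mp ht])]; linarith [mem_Ioi.mp ht]
      · have h1t : (1 : ℝ) + t ≠ 0 := by linarith [mem_Ioi.mp ht]
        field_simp
        ring
  have hderiv : ∀ s ∈ Ioo (0:ℝ) 1, HasDerivWithinAt (fun s : ℝ => s / (1 - s))
      (((1 - s) ^ 2)⁻¹) (Ioo 0 1) s := by
    intro s hs
    have hne : (1 : ℝ) - s ≠ 0 := by linarith [hs.2]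
    have := (hasDerivAt_id s).div ((hasDerivAt_id s).const_sub 1) hne
    refine this.hasDerivWithinAt.congr_deriv ?_
    simp only [id]
    ring
  have hinj : InjOn (fun s : ℝ => s / (1 - s)) (Ioo 0 1) := by
    intro s hs t ht h
    have h1 : (1 : ℝ) - s ≠ 0 := by linarith [hs.2]
    have h2 : (1 : ℝ) - t ≠ 0 := by linarith [ht.2]
    field_simp at h
    linarith
  have key := integral_image_eq_integral_abs_deriv_smul measurableSet_Ioo hderiv hinj
    (fun t => t ^ b * (1 + t) ^ (-(a + b + 1)))
  rw [himg] at key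
  rw [key]
  have congr1 : ∫ s in Ioo (0:ℝ) 1, |((1 - s) ^ 2)⁻¹| •
      ((s / (1 - s)) ^ b * (1 + s / (1 - s)) ^ (-(a + b + 1)))
      = ∫ s in Ioo (0:ℝ) 1, s ^ b * (1 - s) ^ (a - 1) := by
    refine setIntegral_congr_fun measurableSet_Ioo fun s hs => ?_
    have hs0 := hs.1
    have hs1 : (0:ℝ) < 1 - s := by linarith [hs.2]
    have h1 : 1 + s / (1 - s) = (1 - s)⁻¹ := by field_simp; ring
    rw [h1, Real.div_rpow hs0.le hs1.le, ← Real.rpow_neg_one (1 - s),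
      ← Real.rpow_natCast (1-s) 2, ← Real.rpow_mul hs1.le, ← Real.rpow_neg hs1.le]
    rw [abs_of_pos (by positivity), smul_eq_mul, div_eq_mul_inv, ← Real.rpow_neg hs1.le,
      show (-1 : ℝ) * -(a + b + 1) = a + b + 1 by ring]
    push_cast
    have e : (1 - s) ^ (-(2:ℝ)) * (s ^ b * (1 - s) ^ (-b) * (1 - s) ^ (a + b + 1))
        = s ^ b * ((1 - s) ^ (-(2:ℝ)) * ((1 - s) ^ (-b) * (1 - s) ^ (a + b + 1))) := by ring
    rw [e, ← Real.rpow_add hs1, ← Real.rpow_add hs1,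
      show -(2:ℝ) + (-b + (a + b + 1)) = a - 1 by ring]
  rw [congr1, ← integral_Ioc_eq_integral_Ioo, ← intervalIntegral.integral_of_le zero_le_one]
  have := beta_real' (p := b + 1) (q := a) (by linarith) ha
  simp only [add_sub_cancel_right] at this
  rw [this]
  ring_nf

lemma sub_rpow_int {b m z : ℝ} (hb : 0 < b) (hm : 0 < m) (hmz : m ≤ z) :
    ∫ v in Ioo (0:ℝ) m, (z - v) ^ (b - 1) = (z ^ b - (z - m) ^ b) / b := by
  rw [← integral_Ioc_eq_integral_Ioo, ← intervalIntegral.integral_of_le hm.le,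
    intervalIntegral.integral_comp_sub_left (fun x => x ^ (b - 1)) z,
    integral_rpow (Or.inl (by linarith)), sub_zero, sub_add_cancel]

lemma betaA {a b y : ℝ} (ha : 0 < a) (hb : 0 < b) (hy : 0 < y) :
    ∫ w in Ioi (0:ℝ), w ^ b * (w + y) ^ (-(a + b + 1))
      = y ^ (-a) * (Gamma (b + 1) * Gamma a / Gamma (a + b + 1)) := by
  have key := integral_comp_mul_left_Ioi (fun w => w ^ b * (w + y) ^ (-(a + b + 1))) 0 hy
  rw [mul_zero] at key
  have congr1 : ∫ t in Ioi (0:ℝ), (y * t) ^ b * (y * t + y) ^ (-(a + b + 1))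
      = ∫ t in Ioi (0:ℝ), y ^ (-(a + 1)) * (t ^ b * (1 + t) ^ (-(a + b + 1))) := by
    refine setIntegral_congr_fun measurableSet_Ioi fun t ht => ?_
    have ht0 : (0:ℝ) < t := ht
    rw [show y * t + y = y * (1 + t) by ring, Real.mul_rpow hy.le ht0.le,
      Real.mul_rpow hy.le (by linarith)]
    calc y ^ b * t ^ b * (y ^ (-(a + b + 1)) * (1 + t) ^ (-(a + b + 1)))
        = (y ^ b * y ^ (-(a + b + 1))) * (t ^ b * (1 + t) ^ (-(a + b + 1))) := by ring
      _ = y ^ (-(a + 1)) * (t ^ b * (1 + t) ^ (-(a + b + 1))) := by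
          rw [← Real.rpow_add hy, show b + -(a + b + 1) = -(a + 1) by ring]
  rw [congr1, integral_const_mul, beta_Ioi' ha hb, smul_eq_mul] at key
  have : y ^ (-a) = y * y ^ (-(a + 1)) := by
    rw [show -a = 1 + -(a + 1) by ring, Real.rpow_add hy, Real.rpow_one]
  rw [this]
  field_simp at key ⊢
  linarith [key]

lemma betaB {a c : ℝ} (ha : 0 < a) (ha1 : a < 1) (hc : 0 < c) :
    ∫ t in Ioo (0:ℝ) c, t ^ (-a) * (c - t) ^ (a - 1) = π / Real.sin (π * a) := by
  have key := intervalIntegral.integral_comp_mul_left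
    (fun t => t ^ (-a) * (c - t) ^ (a - 1)) (a := 0) (b := 1) hc.ne'
  rw [mul_zero, mul_one] at key
  have congr1 : (∫ t in (0:ℝ)..1, (c * t) ^ (-a) * (c - c * t) ^ (a - 1))
      = ∫ t in (0:ℝ)..1, c⁻¹ * (t ^ ((1 - a) - 1) * (1 - t) ^ (a - 1)) := by
    refine intervalIntegral.integral_congr fun t ht => ?_
    rw [uIcc_of_le zero_le_one] at ht
    rw [show c - c * t = c * (1 - t) by ring, Real.mul_rpow hc.le ht.1,
      Real.mul_rpow hc.le (by linarith [ht.2]), show (1 - a) - 1 = -a by ring]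
    have : c ^ (-a) * c ^ (a - 1) = c⁻¹ := by
      rw [← Real.rpow_add hc, show -a + (a - 1) = -1 by ring, Real.rpow_neg_one]
    calc (c ^ (-a) * t ^ (-a)) * (c ^ (a - 1) * (1 - t) ^ (a - 1))
        = (c ^ (-a) * c ^ (a - 1)) * (t ^ (-a) * (1 - t) ^ (a - 1)) := by ring
      _ = c⁻¹ * (t ^ (-a) * (1 - t) ^ (a - 1)) := by rw [this]
  rw [congr1, intervalIntegral.integral_const_mul,
    beta_real' (by linarith : (0:ℝ) < 1 - a) ha, sub_add_cancel, Gamma_one] at key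
  rw [← integral_Ioc_eq_integral_Ioo, ← intervalIntegral.integral_of_le hc.le]
  have hc' : (c:ℝ) ≠ 0 := hc.ne'
  have := Real.Gamma_mul_Gamma_one_sub a
  rw [smul_eq_mul] at key
  rw [div_one] at key
  have h2 : (∫ t in (0:ℝ)..c, t ^ (-a) * (c - t) ^ (a - 1)) = Gamma (1 - a) * Gamma a := by
    have := congrArg (fun r => c * r) key
    simpa [smul_eq_mul, ← mul_assoc, mul_inv_cancel₀ hc'] using this.symm
  rw [h2, mul_comm, this]

theorem statement8 (a b x z : ℝ) (ha : 0 < a) (ha1 : a < 1) (hb : 0 < b) (hb1 : b < 1)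
    (hx : 0 < x) (hz : 0 < z) :
    (∫ v in Ioo (0:ℝ) (min z x), ∫ y in Ioo (0:ℝ) (x - v), ∫ w in Ioi (0:ℝ),
        ∫ u in Ioo (0:ℝ) w,
        (z - v) ^ (b - 1) * (x - v - y) ^ (a - 1) * (w - u) ^ (b - 1)
          * (w + y) ^ (-(a + b + 1)))
      = π * Gamma a * Gamma b / (Real.sin (π * a) * Gamma (a + b + 1))
          * ((z ^ b - (z - min z x) ^ b) / b) := by
  have hπa : Real.sin (π * a) ≠ 0 :=
    ne_of_gt (Real.sin_pos_of_pos_of_lt_pi (by positivity)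
      (by nlinarith [Real.pi_pos]))
  have hm : 0 < min z x := lt_min hz hx
  have hmz : min z x ≤ z := min_le_left z x
  have hmx : min z x ≤ x := min_le_right z x
  have hGab : Gamma (a + b + 1) ≠ 0 := (Gamma_pos_of_pos (by linarith)).ne'
  have h2 : ∀ v ∈ Ioo (0:ℝ) (min z x), ∀ y ∈ Ioo (0:ℝ) (x - v),
      (∫ w in Ioi (0:ℝ), ∫ u in Ioo (0:ℝ) w,
        (z - v) ^ (b - 1) * (x - v - y) ^ (a - 1) * (w - u) ^ (b - 1) * (w + y) ^ (-(a + b + 1)))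
      = ((z - v) ^ (b - 1) * (x - v - y) ^ (a - 1) / b)
          * (y ^ (-a) * (Gamma (b + 1) * Gamma a / Gamma (a + b + 1))) := by
    intro v hv y hy
    have congrw : EqOn (fun w => ∫ u in Ioo (0:ℝ) w,
        (z - v) ^ (b - 1) * (x - v - y) ^ (a - 1) * (w - u) ^ (b - 1) * (w + y) ^ (-(a + b + 1)))
        (fun w => ((z - v) ^ (b - 1) * (x - v - y) ^ (a - 1) / b)
          * (w ^ b * (w + y) ^ (-(a + b + 1)))) (Ioi 0) := by
      intro w hw
      have hw0 : (0:ℝ) < w := hw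
      have e : (fun u => (z - v) ^ (b - 1) * (x - v - y) ^ (a - 1) * (w - u) ^ (b - 1)
            * (w + y) ^ (-(a + b + 1)))
          = fun u => ((z - v) ^ (b - 1) * (x - v - y) ^ (a - 1) * (w + y) ^ (-(a + b + 1)))
            * (w - u) ^ (b - 1) := funext fun u => by ring
      simp only [e]
      rw [integral_const_mul, sub_rpow_int hb hw0 le_rfl, sub_self,
        Real.zero_rpow hb.ne', sub_zero]
      ring
    rw [setIntegral_congr_fun measurableSet_Ioi congrw, integral_const_mul,
      betaA ha hb hy.1]
  have h3 : ∀ v ∈ Ioo (0:ℝ) (min z x),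
      (∫ y in Ioo (0:ℝ) (x - v), ∫ w in Ioi (0:ℝ), ∫ u in Ioo (0:ℝ) w,
        (z - v) ^ (b - 1) * (x - v - y) ^ (a - 1) * (w - u) ^ (b - 1) * (w + y) ^ (-(a + b + 1)))
      = (z - v) ^ (b - 1)
          * ((Gamma (b + 1) * Gamma a / Gamma (a + b + 1)) / b * (π / Real.sin (π * a))) := by
    intro v hv
    have hxv : 0 < x - v := by have := hv.2; have := lt_of_lt_of_le hv.2 hmx; linarith
    rw [setIntegral_congr_fun measurableSet_Ioo (fun y hy => h2 v hv y hy)]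
    have e : (fun y : ℝ => ((z - v) ^ (b - 1) * (x - v - y) ^ (a - 1) / b)
          * (y ^ (-a) * (Gamma (b + 1) * Gamma a / Gamma (a + b + 1))))
        = fun y : ℝ => ((z - v) ^ (b - 1) * (Gamma (b + 1) * Gamma a / Gamma (a + b + 1)) / b)
          * (y ^ (-a) * (x - v - y) ^ (a - 1)) := funext fun y => by ring
    simp only [e]
    rw [integral_const_mul, betaB ha ha1 hxv]
    ring
  rw [setIntegral_congr_fun measurableSet_Ioo h3, integral_mul_const,
    sub_rpow_int hb hm hmz, Real.Gamma_add_one hb.ne']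
  field_simp
end
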